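/- Let h be a multiplicative function with |h(p^k)| ≤ 2 for all prime powers, h(p^k) = 0 for all primes p > y, and |h(p)| ≤ |f(p) − 1| for p ≤ y where |f(p)| ≤ 1. Then ∑_{m=1}^∞ |h(m)|·log(m)/m ≪ (log y + 1)·exp(∑_{p ≤ y} |1 − f(p)|/p). -/

import Mathlib

open Finset Real

private lemma exp_le_one_add_three_mul {x : ℝ} (h0 : 0 ≤ x) (h1 : x ≤ 1) :
    Real.exp x ≤ 1 + 3 * x := by
  have h2 : 1 + (-x) ≤ Real.exp (-x) := by linarith [Real.add_one_le_exp (-x)]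
  have h3 : Real.exp x ≤ Real.exp 1 := Real.exp_le_exp.mpr h1
  have h4 : Real.exp 1 < 2.7182818286 := Real.exp_one_lt_d9
  have h5 : Real.exp (-x) * Real.exp x = 1 := by rw [← Real.exp_add]; simp
  nlinarith [Real.exp_pos x]

private lemma sum_primesBelow_inv_sq_le (N : ℕ) :
    ∑ p ∈ N.primesBelow, (1 : ℝ) / (p : ℝ) ^ 2 ≤ 1 := by
  have h1 : N.primesBelow ⊆ Finset.Ico 2 N := by
    intro p hp
    rw [Nat.mem_primesBelow] at hp
    exact Finset.mem_Ico.mpr ⟨hp.2.two_le, hp.1⟩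
  have h2 : ∑ p ∈ N.primesBelow, (1 : ℝ) / (p : ℝ) ^ 2 ≤
      ∑ n ∈ Finset.Ico 2 N, (1 : ℝ) / (n : ℝ) ^ 2 :=
    Finset.sum_le_sum_of_subset_of_nonneg h1 (fun n _ _ => by positivity)
  refine h2.trans ?_
  have h3 : ∑ n ∈ Finset.Ico 2 N, (1 : ℝ) / (n : ℝ) ^ 2 ≤
      ∑ n ∈ Finset.Ico 2 N, ((1 : ℝ) / ((n : ℝ) - 1) - 1 / n) := by
    refine Finset.sum_le_sum fun n hn => ?_
    have hn2 : (2 : ℝ) ≤ (n : ℝ) := by exact_mod_cast (Finset.mem_Ico.mp hn).1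
    have e2 : (1:ℝ)*n - ((n:ℝ)-1)*1 = 1 := by ring
    rw [div_sub_div _ _ (by linarith : ((n:ℝ)-1) ≠ 0) (by linarith : (n:ℝ) ≠ 0), e2]
    apply one_div_le_one_div_of_le (by nlinarith)
    nlinarith
  refine h3.trans ?_
  rw [Finset.sum_Ico_eq_sum_range]
  have h4 : ∀ k : ℕ, (1 : ℝ) / ((2 + k : ℕ) : ℝ) - 1 / ((2 + k : ℕ) : ℝ) = 0 := fun _ => by ring
  have h5 : ∀ k ∈ Finset.range (N - 2),
      (1 : ℝ) / (((2 + k : ℕ) : ℝ) - 1) - 1 / ((2 + k : ℕ) : ℝ) =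
        (fun i : ℕ => (1 : ℝ) / (i + 1)) k - (fun i : ℕ => (1 : ℝ) / (i + 1)) (k + 1) := by
    intro k _
    push_cast
    norm_num
    ring_nf
  rw [Finset.sum_congr rfl h5, Finset.sum_range_sub']
  have : (0:ℝ) ≤ 1 / ((N - 2 : ℕ) + 1 : ℝ) := by positivity
  norm_num
  linarith

private lemma mertens_upper (n : ℕ) (hn : 2 ≤ n) :
    ∑ p ∈ (n + 1).primesBelow, Real.log p / p ≤ Real.log n + Real.log 4 := by
  have hn0 : (0 : ℝ) < (n : ℝ) := by positivity
  have hfne : Nat.factorial n ≠ 0 := Nat.factorial_ne_zero n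
  -- Legendre lower bound
  have hLeg : ∀ p ∈ (n + 1).primesBelow, n / p ≤ (Nat.factorial n).factorization p := by
    intro p hp
    rw [Nat.mem_primesBelow] at hp
    obtain ⟨hplt, hpp⟩ := hp
    have hpn : p ≤ n := Nat.lt_succ_iff.mp hplt
    haveI : Fact p.Prime := ⟨hpp⟩
    rw [Nat.factorization_def _ hpp,
      padicValNat_factorial (Nat.lt_succ_self (Nat.log p n))]
    have h1 : 1 ∈ Finset.Ico 1 (Nat.log p n + 1) := by
      simp [Nat.succ_le_iff, Nat.log_pos hpp.one_lt hpn]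
    calc n / p = n / p ^ 1 := by rw [pow_one]
      _ ≤ _ := Finset.single_le_sum (f := fun i => n / p ^ i) (fun i _ => Nat.zero_le _) h1
  -- primes below n+1 are in the support of (n!).factorization
  have hsub : (n + 1).primesBelow ⊆ (Nat.factorial n).factorization.support := by
    intro p hp
    have h1 := hLeg p hp
    rw [Nat.mem_primesBelow] at hp
    have hpn : p ≤ n := Nat.lt_succ_iff.mp hp.1
    have : 1 ≤ n / p := (Nat.one_le_div_iff hp.2.pos).mpr hpn
    rw [Finsupp.mem_support_iff]
    omega
  -- log of factorial as a sum
  have hlogfac : Real.log (Nat.factorial n) =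
      ∑ p ∈ (Nat.factorial n).factorization.support, ((Nat.factorial n).factorization p : ℝ) * Real.log p := by
    conv_lhs => rw [← Nat.factorization_prod_pow_eq_self hfne]
    rw [Finsupp.prod]
    push_cast
    rw [Real.log_prod]
    · refine Finset.sum_congr rfl fun p hp => ?_
      rw [Real.log_pow]
    · intro p hp
      have hpp := Nat.prime_of_mem_primeFactors (by rwa [Nat.support_factorization] at hp)
      exact pow_ne_zero _ (Nat.cast_ne_zero.mpr hpp.pos.ne')
  have hlognn : Real.log (Nat.factorial n) ≤ n * Real.log n := by
    calc Real.log (Nat.factorial n) ≤ Real.log ((n : ℝ) ^ n) := by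
          apply Real.log_le_log (by positivity)
          exact_mod_cast Nat.factorial_le_pow n
      _ = n * Real.log n := Real.log_pow n n
  -- theta bound
  have htheta : ∑ p ∈ (n + 1).primesBelow, Real.log p ≤ n * Real.log 4 := by
    have h1 : Real.log (primorial n) ≤ Real.log ((4 : ℝ) ^ n) := by
      apply Real.log_le_log (by exact_mod_cast primorial_pos n)
      exact_mod_cast primorial_le_4_pow n
    rw [Real.log_pow] at h1
    have h2 : Real.log (primorial n) = ∑ p ∈ (n + 1).primesBelow, Real.log p := by
      rw [primorial, Nat.primesBelow]
      push_cast
      rw [Real.log_prod]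
      intro p hp
      exact Nat.cast_ne_zero.mpr (Finset.mem_filter.mp hp).2.pos.ne'
    rw [h2] at h1
    exact_mod_cast h1
  -- pointwise: (n/p) real ≤ nat floor + 1
  have hpt : ∀ p ∈ (n + 1).primesBelow,
      (n : ℝ) * (Real.log p / p) ≤ ((Nat.factorial n).factorization p : ℝ) * Real.log p + Real.log p := by
    intro p hp
    have hpp := Nat.prime_of_mem_primesBelow hp
    have hp0 : (0 : ℝ) < (p : ℝ) := by exact_mod_cast hpp.pos
    have hlp : 0 ≤ Real.log p := Real.log_nonneg (by exact_mod_cast hpp.one_lt.le)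
    have h1 : (n : ℝ) / p ≤ ((n / p : ℕ) : ℝ) + 1 := by
      rw [div_le_iff₀ hp0]
      have := Nat.lt_mul_div_succ n hpp.pos
      have : (n : ℝ) < (p : ℝ) * ((n / p : ℕ) + 1 : ℝ) := by exact_mod_cast this
      nlinarith
    have h2 : ((n / p : ℕ) : ℝ) ≤ ((Nat.factorial n).factorization p : ℝ) := by exact_mod_cast hLeg p hp
    have h3 : (n : ℝ) * (Real.log p / p) = ((n : ℝ) / p) * Real.log p := by ring
    rw [h3]
    nlinarith
  have hmain : (n : ℝ) * ∑ p ∈ (n + 1).primesBelow, Real.log p / p ≤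
      (n : ℝ) * Real.log n + (n : ℝ) * Real.log 4 := by
    rw [Finset.mul_sum]
    calc ∑ p ∈ (n + 1).primesBelow, (n : ℝ) * (Real.log p / p)
        ≤ ∑ p ∈ (n + 1).primesBelow, (((Nat.factorial n).factorization p : ℝ) * Real.log p + Real.log p) :=
          Finset.sum_le_sum hpt
      _ = (∑ p ∈ (n + 1).primesBelow, ((Nat.factorial n).factorization p : ℝ) * Real.log p) +
            ∑ p ∈ (n + 1).primesBelow, Real.log p := Finset.sum_add_distrib
      _ ≤ Real.log (Nat.factorial n) + (n : ℝ) * Real.log 4 := by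
          refine add_le_add ?_ htheta
          rw [hlogfac]
          refine Finset.sum_le_sum_of_subset_of_nonneg hsub fun p hp _ => ?_
          have hpp := Nat.prime_of_mem_primeFactors (by rwa [Nat.support_factorization] at hp)
          have : 0 ≤ Real.log p := Real.log_nonneg (by exact_mod_cast hpp.one_lt.le)
          positivity
      _ ≤ (n : ℝ) * Real.log n + (n : ℝ) * Real.log 4 := by linarith
  rw [← mul_le_mul_iff_right₀ hn0, mul_add]
  exact hmain

set_option maxHeartbeats 1000000 in
/-- If `h` is multiplicative with `|h(p^k)| ≤ 2` on all prime powers, `h(p^k) = 0`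
for primes `p > y`, and `|h(p)| ≤ |f(p) − 1|` for `p ≤ y` where `|f(p)| ≤ 1`, then
`∑_m |h(m)| log m / m ≪ (log y + 1)·exp(∑_{p ≤ y} |1 − f(p)|/p)` with an absolute
constant. -/
theorem stmt_16 :
    ∃ C : ℝ, 0 < C ∧ ∀ (y : ℝ), 2 ≤ y → ∀ (f h : ℕ → ℂ),
      h 1 = 1 → h 0 = 0 →
      (∀ a b : ℕ, Nat.Coprime a b → h (a * b) = h a * h b) →
      (∀ p : ℕ, p.Prime → ∀ k : ℕ, 1 ≤ k → ‖h (p ^ k)‖ ≤ 2) →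
      (∀ p : ℕ, p.Prime → y < (p : ℝ) → ∀ k : ℕ, 1 ≤ k → h (p ^ k) = 0) →
      (∀ p : ℕ, p.Prime → (p : ℝ) ≤ y → ‖h p‖ ≤ ‖f p - 1‖) →
      (∀ p : ℕ, p.Prime → ‖f p‖ ≤ 1) →
      Summable (fun m : ℕ => ‖h m‖ * Real.log m / m) ∧
      ∑' m : ℕ, ‖h m‖ * Real.log m / m ≤
        C * (Real.log y + 1) *
          Real.exp (∑ p ∈ (Finset.range (⌊y⌋₊ + 1)).filter Nat.Prime,
            ‖1 - f p‖ / p) := by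
  refine ⟨2 * Real.exp 78, by positivity, ?_⟩
  intro y hy f h h1 h0 hmul hpk hbig hsmall hf
  have hy0 : (0:ℝ) < y := by linarith
  have hy1 : (1:ℝ) ≤ y := by linarith
  set L : ℝ := Real.log y with hLdef
  have hL0 : 0 ≤ L := Real.log_nonneg hy1
  set σ : ℝ := (2 + L)⁻¹ with hσdef
  have h2L : (0:ℝ) < 2 + L := by linarith
  have hσ0 : 0 < σ := by positivity
  have hσhalf : σ ≤ 1/2 := by
    rw [hσdef]
    rw [show (1:ℝ)/2 = (2:ℝ)⁻¹ by norm_num]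
    exact inv_anti₀ (by norm_num) (by linarith)
  have hσ1 : σ - 1 < 0 := by linarith
  set N : ℕ := ⌊y⌋₊ + 1 with hNdef
  have hyN : y < (N:ℝ) := by
    have := Nat.lt_floor_add_one y
    rw [hNdef]; push_cast; linarith
  have hpley : ∀ p : ℕ, p < N → (p:ℝ) ≤ y := by
    intro p hp
    have h1' : p ≤ ⌊y⌋₊ := Nat.lt_succ_iff.mp hp
    calc (p:ℝ) ≤ (⌊y⌋₊ : ℝ) := by exact_mod_cast h1'
      _ ≤ y := Nat.floor_le hy0.le
  set F : ℕ → ℝ := fun m => ‖h m‖ * (m:ℝ) ^ (σ - 1) with hFdef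
  have hF0 : F 0 = 0 := by simp [hFdef, h0]
  have hF1 : F 1 = 1 := by simp [hFdef, h1]
  have hFnonneg : ∀ m, 0 ≤ F m := fun m =>
    mul_nonneg (norm_nonneg _) (Real.rpow_nonneg (Nat.cast_nonneg m) _)
  have hFmul : ∀ {a b : ℕ}, Nat.Coprime a b → F (a*b) = F a * F b := by
    intro a b hab
    simp only [hFdef]
    rw [hmul a b hab, norm_mul, Nat.cast_mul,
      Real.mul_rpow (Nat.cast_nonneg a) (Nat.cast_nonneg b)]
    ring
  have hcast : ∀ (p k : ℕ), 0 < p → ((p ^ k : ℕ) : ℝ) ^ (σ - 1) = ((p:ℝ) ^ (σ - 1)) ^ k := by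
    intro p k hp
    have hp0 : (0:ℝ) ≤ (p:ℝ) := Nat.cast_nonneg p
    push_cast
    rw [← Real.rpow_natCast ((p:ℝ) ^ (σ - 1)) k, ← Real.rpow_natCast (p:ℝ) k,
      ← Real.rpow_mul hp0, ← Real.rpow_mul hp0, mul_comm]
  have hFpk2 : ∀ p : ℕ, p.Prime → ∀ k : ℕ, 1 ≤ k → F (p^k) ≤ 2 * ((p:ℝ)^(σ-1))^k := by
    intro p hp k hk
    have hb := hpk p hp k hk
    simp only [hFdef]
    rw [hcast p k hp.pos]
    exact mul_le_mul_of_nonneg_right hb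
      (pow_nonneg (Real.rpow_nonneg (Nat.cast_nonneg p) _) k)
  have hβlt1 : ∀ p : ℕ, p.Prime → (p:ℝ)^(σ-1) < 1 := fun p hp =>
    Real.rpow_lt_one_of_one_lt_of_neg (by exact_mod_cast hp.one_lt) hσ1
  have hβ0 : ∀ p : ℕ, 0 ≤ (p:ℝ)^(σ-1) := fun p => Real.rpow_nonneg (Nat.cast_nonneg p) _
  have hsum_p : ∀ {p : ℕ}, p.Prime → Summable (fun k : ℕ => ‖F (p^k)‖) := by
    intro p hp
    refine Summable.of_nonneg_of_le (fun k => norm_nonneg _) (fun k => ?_)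
      ((summable_geometric_of_lt_one (hβ0 p) (hβlt1 p hp)).mul_left 2)
    rw [Real.norm_eq_abs, abs_of_nonneg (hFnonneg _)]
    cases k with
    | zero => simpa [hF1] using one_le_two
    | succ n => exact hFpk2 p hp (n+1) (Nat.succ_le_succ (Nat.zero_le n))
  obtain ⟨hsumsm, hprod⟩ :=
    EulerProduct.summable_and_hasSum_smoothNumbers_prod_primesBelow_tsum
      (f := F) hF1 hFmul hsum_p N
  -- support of F
  have hsupp : ∀ m : ℕ, m ∉ N.smoothNumbers → F m = 0 := by
    intro m hm
    by_cases hm0 : m = 0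
    · simp [hm0, hF0]
    · rw [Nat.mem_smoothNumbers'] at hm
      push_neg at hm
      obtain ⟨p, hp, hpm, hpN⟩ := hm
      have hpy : y < (p:ℝ) := lt_of_lt_of_le hyN (by exact_mod_cast hpN)
      have hk := hp.factorization_pos_of_dvd hm0 hpm
      have hdecomp := Nat.ordProj_mul_ordCompl_eq_self m p
      have hcop : Nat.Coprime (p ^ m.factorization p) (m / p ^ m.factorization p) :=
        Nat.Coprime.pow_left _ (Nat.coprime_ordCompl hp hm0)
      have hhm : h m = 0 := by
        rw [← hdecomp, hmul _ _ hcop, hbig p hp hpy _ hk, zero_mul]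
      simp [hFdef, hhm]
  have hFsubt : Summable (fun m : N.smoothNumbers => F m) := by
    refine hsumsm.congr fun m => ?_
    rw [Real.norm_eq_abs, abs_of_nonneg (hFnonneg _)]
  have hind : (N.smoothNumbers).indicator F = F := by
    funext m
    by_cases hm : m ∈ N.smoothNumbers
    · rw [Set.indicator_of_mem hm]
    · rw [Set.indicator_of_notMem hm, hsupp m hm]
  have hsumF : Summable F := by
    rw [← hind]; exact summable_subtype_iff_indicator.mp hFsubt
  have htsumF : ∑' m, F m = ∏ p ∈ N.primesBelow, ∑' k : ℕ, F (p ^ k) := by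
    calc ∑' m, F m = ∑' m, (N.smoothNumbers).indicator F m := by rw [hind]
      _ = ∑' (m : N.smoothNumbers), F m := (_root_.tsum_subtype _ _).symm
      _ = _ := hprod.tsum_eq
  -- bound on each Euler factor
  have hfactor : ∀ p ∈ N.primesBelow, (∑' k : ℕ, F (p ^ k)) ≤
      Real.exp (‖1 - f p‖/(p:ℝ) + 6 * (σ * Real.log p / p) + 72 / (p:ℝ)^2) := by
    intro p hpmem
    have hp := Nat.prime_of_mem_primesBelow hpmem
    have hpN := Nat.lt_of_mem_primesBelow hpmem
    have hpy : (p:ℝ) ≤ y := hpley p hpN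
    have hp0 : (0:ℝ) < p := by exact_mod_cast hp.pos
    have hp2 : (2:ℝ) ≤ p := by exact_mod_cast hp.two_le
    set β := (p:ℝ) ^ (σ - 1) with hβ
    have hb0 : 0 ≤ β := hβ0 p
    have hb1 : β < 1 := hβlt1 p hp
    have hlogp0 : 0 ≤ Real.log p := Real.log_nonneg (by linarith)
    have hσlogp : σ * Real.log p ≤ 1 := by
      have hlp : Real.log p ≤ L := Real.log_le_log hp0 hpy
      calc σ * Real.log p ≤ σ * (2 + L) := by nlinarith
        _ = 1 := by rw [hσdef]; field_simp
    have hpσ : (p:ℝ) ^ (σ:ℝ) = Real.exp (σ * Real.log p) := by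
      rw [Real.rpow_def_of_pos hp0, mul_comm]
    have hpσ3 : (p:ℝ) ^ (σ:ℝ) ≤ 3 := by
      rw [hpσ]
      have h1' : Real.exp (σ * Real.log p) ≤ Real.exp 1 := Real.exp_le_exp.mpr hσlogp
      have h2' : Real.exp 1 < 2.7182818286 := Real.exp_one_lt_d9
      linarith
    have hβform : β = (p:ℝ)^(σ:ℝ) / p := by
      rw [hβ, Real.rpow_sub hp0, Real.rpow_one]
    have hβ3p : β ≤ 3 / (p:ℝ) := by
      rw [hβform]
      exact div_le_div_of_nonneg_right hpσ3 hp0.le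
    have hβ34 : β ≤ 3/4 := by
      have e1 : β = ((p:ℝ) ^ (1 - σ))⁻¹ := by
        rw [hβ, ← Real.rpow_neg hp0.le]
        norm_num
      have e3 : (4:ℝ)/3 ≤ Real.sqrt 2 := by
        nlinarith [Real.sq_sqrt (by norm_num : (0:ℝ) ≤ 2), Real.sqrt_nonneg 2]
      have e2 : Real.sqrt 2 ≤ (p:ℝ) ^ (1 - σ) := by
        calc Real.sqrt 2 = (2:ℝ) ^ ((1:ℝ)/2) := by
              rw [Real.sqrt_eq_rpow]
          _ ≤ (2:ℝ) ^ (1 - σ) :=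
            Real.rpow_le_rpow_of_exponent_le one_le_two (by linarith)
          _ ≤ (p:ℝ) ^ (1 - σ) := Real.rpow_le_rpow (by norm_num) hp2 (by linarith)
      rw [e1]
      calc ((p:ℝ) ^ (1 - σ))⁻¹ ≤ ((4:ℝ)/3)⁻¹ :=
            inv_anti₀ (by norm_num) (e3.trans e2)
        _ ≤ 3/4 := by norm_num
    have hc : Summable (fun k : ℕ => F (p ^ k)) := by
      refine (hsum_p hp).congr fun k => ?_
      rw [Real.norm_eq_abs, abs_of_nonneg (hFnonneg _)]
    have htail_sum : Summable (fun k : ℕ => 2 * β ^ (k + 2)) := by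
      refine ((summable_geometric_of_lt_one hb0 hb1).mul_left (2 * β^2)).congr fun k => ?_
      rw [pow_add]; ring
    have hdec : (∑' k : ℕ, F (p ^ k)) = 1 + (F p + ∑' k : ℕ, F (p ^ (k + 2))) := by
      rw [hc.tsum_eq_zero_add]
      have hc1 : Summable (fun k : ℕ => F (p ^ (k + 1))) := (summable_nat_add_iff 1).mpr hc
      rw [hc1.tsum_eq_zero_add]
      simp only [pow_zero, pow_one, hF1]
      norm_num
    have htail : (∑' k : ℕ, F (p ^ (k + 2))) ≤ 72 / (p:ℝ)^2 := by
      have hle : ∀ k : ℕ, F (p ^ (k + 2)) ≤ 2 * β ^ (k + 2) := fun k =>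
        hFpk2 p hp (k+2) (by omega)
      have h1' : (∑' k : ℕ, F (p^(k+2))) ≤ ∑' k : ℕ, 2 * β^(k+2) :=
        Summable.tsum_le_tsum hle ((summable_nat_add_iff 2).mpr hc) htail_sum
      have h2' : (∑' k : ℕ, 2 * β^(k+2)) = 2 * β^2 * (1 - β)⁻¹ := by
        calc (∑' k : ℕ, 2 * β^(k+2)) = ∑' k : ℕ, (2 * β^2) * β^k := by
              congr 1; funext k; rw [pow_add]; ring
          _ = (2 * β^2) * ∑' k : ℕ, β^k := tsum_mul_left
          _ = 2 * β^2 * (1 - β)⁻¹ := by rw [tsum_geometric_of_lt_one hb0 hb1]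
      have h3' : (1 - β)⁻¹ ≤ 4 := by
        have h14 : (1:ℝ)/4 ≤ 1 - β := by linarith
        calc (1 - β)⁻¹ ≤ ((1:ℝ)/4)⁻¹ := inv_anti₀ (by norm_num) h14
          _ = 4 := by norm_num
      have h4' : β^2 ≤ 9 / (p:ℝ)^2 := by
        calc β^2 ≤ (3/(p:ℝ))^2 := pow_le_pow_left₀ hb0 hβ3p 2
          _ = 9 / (p:ℝ)^2 := by rw [div_pow]; norm_num
      have hp2pos : (0:ℝ) < (p:ℝ)^2 := by positivity
      calc (∑' k : ℕ, F (p^(k+2))) ≤ 2 * β^2 * (1 - β)⁻¹ := h2' ▸ h1'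
        _ ≤ 2 * (9 / (p:ℝ)^2) * 4 := by nlinarith [sq_nonneg β]
        _ = 72 / (p:ℝ)^2 := by ring
    have hFp : F p ≤ ‖1 - f p‖ / p + 6 * (σ * Real.log p / p) := by
      have h1' : ‖h p‖ ≤ ‖1 - f p‖ := (hsmall p hp hpy).trans_eq (norm_sub_rev _ _)
      have h3' : ‖1 - f p‖ ≤ 2 := by
        calc ‖1 - f p‖ ≤ ‖(1:ℂ)‖ + ‖f p‖ := norm_sub_le _ _
          _ ≤ 2 := by rw [norm_one]; linarith [hf p hp]
      have h4' : F p = ‖h p‖ * ((p:ℝ)^(σ:ℝ) / p) := by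
        simp only [hFdef]
        rw [Real.rpow_sub hp0, Real.rpow_one]
      have h5' : (p:ℝ)^(σ:ℝ) ≤ 1 + 3*(σ * Real.log p) := by
        rw [hpσ]; exact exp_le_one_add_three_mul (by positivity) hσlogp
      have hpσ0 : 0 ≤ (p:ℝ)^(σ:ℝ) := Real.rpow_nonneg hp0.le _
      have hn0 : 0 ≤ ‖h p‖ := norm_nonneg _
      have hn1 : 0 ≤ ‖1 - f p‖ := norm_nonneg _
      rw [h4']
      have hx0 : 0 ≤ σ * Real.log p := mul_nonneg hσ0.le hlogp0
      have key : ‖h p‖ * (p:ℝ)^(σ:ℝ) ≤ ‖1 - f p‖ + 6 * (σ * Real.log p) := by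
        calc ‖h p‖ * (p:ℝ)^(σ:ℝ) ≤ ‖1 - f p‖ * (1 + 3*(σ * Real.log p)) :=
              mul_le_mul h1' h5' hpσ0 hn1
          _ ≤ ‖1 - f p‖ + 6 * (σ * Real.log p) := by nlinarith
      calc ‖h p‖ * ((p:ℝ)^(σ:ℝ)/p) = (‖h p‖ * (p:ℝ)^(σ:ℝ))/p := by ring
        _ ≤ (‖1 - f p‖ + 6 * (σ * Real.log p))/p := by
            exact div_le_div_of_nonneg_right key hp0.le
        _ = ‖1 - f p‖/p + 6 * (σ * Real.log p)/p := by ring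
        _ = ‖1 - f p‖/p + 6 * (σ * Real.log p / p) := by ring
    rw [hdec]
    have hbd : F p + (∑' k : ℕ, F (p ^ (k + 2))) ≤
        ‖1 - f p‖/(p:ℝ) + 6 * (σ * Real.log p / p) + 72 / (p:ℝ)^2 := by linarith
    calc 1 + (F p + ∑' k : ℕ, F (p ^ (k + 2)))
        ≤ 1 + (‖1 - f p‖/(p:ℝ) + 6 * (σ * Real.log p / p) + 72 / (p:ℝ)^2) := by linarith
      _ ≤ _ := by
          linarith [Real.add_one_le_exp
            (‖1 - f p‖/(p:ℝ) + 6 * (σ * Real.log p / p) + 72 / (p:ℝ)^2)]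
  -- sums over primes
  have hM : ∑ p ∈ N.primesBelow, Real.log p / p ≤ L + 2 := by
    have hfl2 : 2 ≤ ⌊y⌋₊ := Nat.le_floor (by exact_mod_cast hy)
    have hmert := mertens_upper ⌊y⌋₊ hfl2
    rw [← hNdef] at hmert
    refine hmert.trans ?_
    have hfl0 : (0:ℝ) < (⌊y⌋₊ : ℝ) := by exact_mod_cast Nat.lt_of_lt_of_le Nat.zero_lt_two hfl2
    have h1' : Real.log (⌊y⌋₊ : ℝ) ≤ L := Real.log_le_log hfl0 (Nat.floor_le hy0.le)
    have h2' : Real.log 4 ≤ 2 := by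
      rw [show (4:ℝ) = 2^2 by norm_num, Real.log_pow]
      push_cast
      nlinarith [Real.log_two_lt_d9, Real.log_nonneg (by norm_num : (1:ℝ) ≤ 2)]
    linarith
  have hMnn : 0 ≤ ∑ p ∈ N.primesBelow, Real.log p / p := by
    refine Finset.sum_nonneg fun p hp => ?_
    have hpp := Nat.prime_of_mem_primesBelow hp
    have : (1:ℝ) ≤ p := by exact_mod_cast hpp.one_lt.le
    have := Real.log_nonneg this
    positivity
  have hσM : σ * (∑ p ∈ N.primesBelow, Real.log p / p) ≤ 1 := by
    calc σ * (∑ p ∈ N.primesBelow, Real.log p / p) ≤ σ * (L + 2) := by nlinarith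
      _ = 1 := by rw [hσdef]; field_simp; ring
  have hQ := sum_primesBelow_inv_sq_le N
  have hQnn : 0 ≤ ∑ p ∈ N.primesBelow, (1:ℝ) / (p:ℝ)^2 :=
    Finset.sum_nonneg fun p _ => by positivity
  set A : ℝ := ∑ p ∈ N.primesBelow, ‖1 - f p‖/(p:ℝ) with hAdef
  -- product bound
  have hprodle : (∏ p ∈ N.primesBelow, ∑' k : ℕ, F (p ^ k)) ≤ Real.exp 78 * Real.exp A := by
    calc (∏ p ∈ N.primesBelow, ∑' k : ℕ, F (p ^ k))
        ≤ ∏ p ∈ N.primesBelow,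
            Real.exp (‖1 - f p‖/(p:ℝ) + 6 * (σ * Real.log p / p) + 72 / (p:ℝ)^2) :=
          Finset.prod_le_prod (fun p _ => tsum_nonneg fun k => hFnonneg _) hfactor
      _ = Real.exp (∑ p ∈ N.primesBelow,
            (‖1 - f p‖/(p:ℝ) + 6 * (σ * Real.log p / p) + 72 / (p:ℝ)^2)) :=
          (Real.exp_sum _ _).symm
      _ ≤ Real.exp 78 * Real.exp A := by
          rw [← Real.exp_add]
          apply Real.exp_le_exp.mpr
          have e1 : ∑ p ∈ N.primesBelow,
              (‖1 - f p‖/(p:ℝ) + 6 * (σ * Real.log p / p) + 72 / (p:ℝ)^2) =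
              A + (∑ p ∈ N.primesBelow, 6 * (σ * Real.log p / p)) +
                ∑ p ∈ N.primesBelow, 72 / (p:ℝ)^2 := by
            rw [Finset.sum_add_distrib, Finset.sum_add_distrib]
          have e2 : ∑ p ∈ N.primesBelow, 6 * (σ * Real.log p / p) =
              6 * σ * ∑ p ∈ N.primesBelow, Real.log p / p := by
            rw [Finset.mul_sum]
            try exact Finset.sum_congr rfl fun p _ => by ring
          have e3 : ∑ p ∈ N.primesBelow, 72 / (p:ℝ)^2 =
              72 * ∑ p ∈ N.primesBelow, (1:ℝ) / (p:ℝ)^2 := by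
            rw [Finset.mul_sum]
            try exact Finset.sum_congr rfl fun p _ => by ring
          rw [e1, e2, e3]
          nlinarith
  -- final assembly
  have hTnn : ∀ m : ℕ, 0 ≤ ‖h m‖ * Real.log m / m := by
    intro m
    have hlog : 0 ≤ Real.log m := by
      rcases Nat.eq_zero_or_pos m with hm | hm
      · simp [hm]
      · exact Real.log_nonneg (by exact_mod_cast hm)
    positivity
  have hTle : ∀ m : ℕ, ‖h m‖ * Real.log m / m ≤ (2 + L) * F m := by
    intro m
    rcases Nat.eq_zero_or_pos m with hm | hm
    · simp [hm, h0, hF0]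
    · have hm0 : (0:ℝ) < m := by exact_mod_cast hm
      have hlog : Real.log m ≤ (m:ℝ)^(σ:ℝ) / σ := Real.log_le_rpow_div hm0.le hσ0
      have hrw : (m:ℝ)^(σ-1) = (m:ℝ)^(σ:ℝ) / m := by
        rw [Real.rpow_sub hm0, Real.rpow_one]
      have h2L1 : (2+L) = σ⁻¹ := by rw [hσdef, inv_inv]
      calc ‖h m‖ * Real.log m / m ≤ ‖h m‖ * ((m:ℝ)^(σ:ℝ)/σ) / m := by
            gcongr <;> exact norm_nonneg _
        _ = (2 + L) * F m := by
            simp only [hFdef]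
            rw [hrw, h2L1]
            try field_simp
            try ring
  have hsumT : Summable (fun m : ℕ => ‖h m‖ * Real.log m / m) :=
    Summable.of_nonneg_of_le hTnn hTle (hsumF.mul_left (2+L))
  refine ⟨hsumT, ?_⟩
  have hset : (Finset.range (⌊y⌋₊ + 1)).filter Nat.Prime = N.primesBelow := rfl
  have hchain : ∑' m : ℕ, ‖h m‖ * Real.log m / m ≤ (2 + L) * (Real.exp 78 * Real.exp A) := by
    calc ∑' m : ℕ, ‖h m‖ * Real.log m / m ≤ ∑' m : ℕ, (2 + L) * F m :=
          Summable.tsum_le_tsum hTle hsumT (hsumF.mul_left _)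
      _ = (2 + L) * ∑' m, F m := tsum_mul_left
      _ = (2 + L) * ∏ p ∈ N.primesBelow, ∑' k : ℕ, F (p ^ k) := by rw [htsumF]
      _ ≤ (2 + L) * (Real.exp 78 * Real.exp A) := by
          apply mul_le_mul_of_nonneg_left hprodle (by linarith)
  rw [hset]
  calc ∑' m : ℕ, ‖h m‖ * Real.log m / m ≤ (2 + L) * (Real.exp 78 * Real.exp A) := hchain
    _ ≤ 2 * Real.exp 78 * (L + 1) * Real.exp A := by
        have h2L2 : (2 + L) ≤ 2 * (L + 1) := by linarith
        calc (2 + L) * (Real.exp 78 * Real.exp A)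
            ≤ (2 * (L + 1)) * (Real.exp 78 * Real.exp A) :=
              mul_le_mul_of_nonneg_right h2L2 (by positivity)
          _ = 2 * Real.exp 78 * (L + 1) * Real.exp A := by ring
    _ = 2 * Real.exp 78 * (Real.log y + 1) * Real.exp A := by rw [hLdef]
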